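/- Let E = EuclideanSpace ℝ (Fin n), let X ⊆ E, let V : E → ℝ be differentiable, let f : E → E and g : Fin m → E → E, and let θ > 0, σ > 0, σ₀ > 0, c₀ > 0. Assume: (baseline) for every x ∈ X there exists u : Fin m → ℝ with |u i| ≤ θ for all i such that ⟪∇V(x), f(x)⟫ + ∑_i u i · ⟪∇V(x), g i (x)⟫ ≤ −σ·V(x); and (margin) for every x ∈ X with V(x) ≤ c₀ there exists such u with ⟪∇V(x), f(x)⟫ + ∑_i u i · ⟪∇V(x), g i (x)⟫ ≤ −(σ + σ₀)·V(x). Then there exists α : ℝ → ℝ that is continuous on [0, ∞), strictly increasing on [0, ∞), strictly concave on [0, ∞), with α(0) = 0, such that: (i) for every x ∈ X there exists u : Fin m → ℝ with |u i| ≤ θ for all i and ⟪∇V(x), f(x)⟫ + ∑_i u i · ⟪∇V(x), g i (x)⟫ ≤ −α(V(x)); and (ii) for every c > 0 there exists ε₀ ∈ (0, min{c, c₀}) such that for all ε ∈ (0, ε₀), ln(c/ε)/∫_ε^c (1/α(y)) dy > σ. -/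

import Mathlib

open intervalIntegral Real

/-- Feasibility-preserving acceleration: from a feasible linear baseline with a
strict margin on a sublevel set, one can construct a strictly concave class-K
comparison function that remains feasible under the same input bound and strictly
improves the windowed nominal rate for all sufficiently wide windows. -/
theorem stmt_13 {n m : ℕ}
    (X : Set (EuclideanSpace ℝ (Fin n)))
    (V : EuclideanSpace ℝ (Fin n) → ℝ) (hV : Differentiable ℝ V)
    (f : EuclideanSpace ℝ (Fin n) → EuclideanSpace ℝ (Fin n))
    (g : Fin m → EuclideanSpace ℝ (Fin n) → EuclideanSpace ℝ (Fin n))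
    (θ σ σ₀ c₀ : ℝ) (hθ : 0 < θ) (hσ : 0 < σ) (hσ₀ : 0 < σ₀) (hc₀ : 0 < c₀)
    (hbaseline : ∀ x ∈ X, ∃ u : Fin m → ℝ, (∀ i, |u i| ≤ θ) ∧
      (inner ℝ (gradient V x) (f x) : ℝ)
        + ∑ i, u i * (inner ℝ (gradient V x) (g i x) : ℝ) ≤ -(σ * V x))
    (hmargin : ∀ x ∈ X, V x ≤ c₀ → ∃ u : Fin m → ℝ, (∀ i, |u i| ≤ θ) ∧
      (inner ℝ (gradient V x) (f x) : ℝ)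
        + ∑ i, u i * (inner ℝ (gradient V x) (g i x) : ℝ) ≤ -((σ + σ₀) * V x)) :
    ∃ α : ℝ → ℝ,
      ContinuousOn α (Set.Ici 0) ∧
      StrictMonoOn α (Set.Ici 0) ∧
      StrictConcaveOn ℝ (Set.Ici 0) α ∧
      α 0 = 0 ∧
      (∀ x ∈ X, ∃ u : Fin m → ℝ, (∀ i, |u i| ≤ θ) ∧
        (inner ℝ (gradient V x) (f x) : ℝ)
          + ∑ i, u i * (inner ℝ (gradient V x) (g i x) : ℝ) ≤ -α (V x)) ∧
      (∀ c : ℝ, 0 < c → ∃ ε₀ : ℝ, 0 < ε₀ ∧ ε₀ < min c c₀ ∧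
        ∀ ε : ℝ, 0 < ε → ε < ε₀ →
          σ < Real.log (c / ε) / ∫ y in ε..c, 1 / α y) := by
  have hA : (0:ℝ) < σ * c₀ := by positivity
  set A := σ * c₀ with hAdef
  set B := (σ + σ₀) / (σ * c₀) with hBdef
  have hB : 0 < B := by rw [hBdef]; positivity
  have hAB : A * B = σ + σ₀ := by
    rw [hAdef, hBdef]; field_simp
  set α : ℝ → ℝ := fun y => A * (1 - Real.exp (-B * y)) with hαdef
  have hαcont : Continuous α := by
    rw [hαdef]; fun_prop
  have hd1 : ∀ y : ℝ, HasDerivAt α (A * B * Real.exp (-B * y)) y := by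
    intro y
    have h1 : HasDerivAt (fun y : ℝ => -B * y) (-B) y := by
      simpa using (hasDerivAt_id y).const_mul (-B)
    have h3 := ((hasDerivAt_const y (1:ℝ)).sub h1.exp).const_mul A
    exact h3.congr_deriv (by ring)
  have hαle : ∀ y : ℝ, α y ≤ (σ + σ₀) * y := by
    intro y
    have h := Real.add_one_le_exp (-B * y)
    have h2 : 1 - Real.exp (-B * y) ≤ B * y := by linarith
    calc α y ≤ A * (B * y) := mul_le_mul_of_nonneg_left h2 hA.le
      _ = (σ + σ₀) * y := by rw [← hAB]; ring
  have hαpos : ∀ y : ℝ, 0 < y → 0 < α y := by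
    intro y hy
    have h : Real.exp (-B * y) < 1 := Real.exp_lt_one_iff.mpr (by nlinarith)
    have : 0 < 1 - Real.exp (-B * y) := by linarith
    exact mul_pos hA this
  have hαltA : ∀ y : ℝ, α y < A := by
    intro y
    have h := Real.exp_pos (-B * y)
    have h2 : α y = A * (1 - Real.exp (-B * y)) := rfl
    nlinarith [h, hA, h2]
  refine ⟨α, hαcont.continuousOn, ?_, ?_, by simp [hαdef], ?_, ?_⟩
  · -- strict mono
    exact strictMonoOn_of_deriv_pos (convex_Ici 0) hαcont.continuousOn
      (fun y _ => by rw [(hd1 y).deriv]; positivity)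
  · -- strict concave
    have hderiv_eq : deriv α = fun y => A * B * Real.exp (-B * y) :=
      funext fun y => (hd1 y).deriv
    have hd2 : ∀ y : ℝ, HasDerivAt (deriv α) (A * B * (Real.exp (-B * y) * (-B))) y := by
      intro y
      rw [hderiv_eq]
      have h1 : HasDerivAt (fun y : ℝ => -B * y) (-B) y := by
        simpa using (hasDerivAt_id y).const_mul (-B)
      exact h1.exp.const_mul (A * B)
    refine strictConcaveOn_of_deriv2_neg (convex_Ici 0) hαcont.continuousOn (fun y _ => ?_)
    have h2 : deriv^[2] α y = deriv (deriv α) y := by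
      simp [Function.iterate_succ, Function.comp]
    rw [h2, (hd2 y).deriv]
    have h3 : A * B * (Real.exp (-B * y) * -B) = -(A * B * B * Real.exp (-B * y)) := by ring
    have h4 : 0 < A * B * B * Real.exp (-B * y) := by positivity
    rw [h3]
    linarith
  · -- feasibility
    intro x hx
    by_cases hvc : V x ≤ c₀
    · obtain ⟨u, hu, hle⟩ := hmargin x hx hvc
      refine ⟨u, hu, hle.trans ?_⟩
      have := hαle (V x)
      linarith
    · obtain ⟨u, hu, hle⟩ := hbaseline x hx
      refine ⟨u, hu, hle.trans ?_⟩
      push_neg at hvc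
      have h1 : α (V x) < A := hαltA (V x)
      have h2 : A ≤ σ * V x := by rw [hAdef]; nlinarith
      linarith
  · -- rate improvement
    have hInt : ∀ a b : ℝ, 0 < a → a ≤ b →
        IntervalIntegrable (fun y => 1 / α y) MeasureTheory.volume a b := by
      intro a b ha hab
      apply ContinuousOn.intervalIntegrable
      apply ContinuousOn.div continuousOn_const hαcont.continuousOn
      intro y hy
      rw [Set.uIcc_of_le hab] at hy
      exact (hαpos y (lt_of_lt_of_le ha hy.1)).ne'
    intro c hc
    set σ' := σ + σ₀ / 2 with hσ'def
    have hσ'pos : 0 < σ' := by rw [hσ'def]; positivity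
    have hσσ' : σ < σ' := by rw [hσ'def]; linarith
    have hσ'lt : σ' < σ + σ₀ := by rw [hσ'def]; linarith
    have hR : 1 < (σ + σ₀) / σ' := (one_lt_div hσ'pos).2 hσ'lt
    set c₁ := min (min c c₀ / 2) (Real.log ((σ + σ₀) / σ') / B) with hc₁def
    have hmcc : 0 < min c c₀ := lt_min hc hc₀
    have hc₁pos : 0 < c₁ :=
      lt_min (by positivity) (div_pos (Real.log_pos hR) hB)
    have hc₁lt : c₁ < min c c₀ :=
      lt_of_le_of_lt (min_le_left _ _) (half_lt_self hmcc)
    have hc₁c : c₁ < c := hc₁lt.trans_le (min_le_left _ _)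
    -- key lower bound on α near 0
    have hexpc₁ : σ' ≤ (σ + σ₀) * Real.exp (-(B * c₁)) := by
      have h1 : c₁ * B ≤ Real.log ((σ + σ₀) / σ') :=
        (le_div_iff₀ hB).mp (min_le_right _ _)
      have h2 : Real.exp (-Real.log ((σ + σ₀) / σ')) ≤ Real.exp (-(B * c₁)) :=
        Real.exp_le_exp.2 (by linarith [h1, mul_comm c₁ B])
      have h3 : Real.exp (-Real.log ((σ + σ₀) / σ')) = σ' / (σ + σ₀) := by
        rw [Real.exp_neg, Real.exp_log (by positivity), inv_div]
      rw [h3] at h2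
      calc σ' = (σ + σ₀) * (σ' / (σ + σ₀)) := by field_simp
        _ ≤ (σ + σ₀) * Real.exp (-(B * c₁)) :=
          mul_le_mul_of_nonneg_left h2 (by positivity)
    have hlow : ∀ y : ℝ, 0 < y → y ≤ c₁ → σ' * y ≤ α y := by
      intro y hy hyc
      have h1 := Real.add_one_le_exp (B * y)
      have hepos := Real.exp_pos (-B * y)
      have hmul : Real.exp (B * y) * Real.exp (-B * y) = 1 := by
        rw [← Real.exp_add]; ring_nf; exact Real.exp_zero
      have h2 : B * y * Real.exp (-B * y) ≤ 1 - Real.exp (-B * y) := by nlinarith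
      have h3 : Real.exp (-(B * c₁)) ≤ Real.exp (-B * y) :=
        Real.exp_le_exp.2 (by nlinarith)
      calc σ' * y ≤ ((σ + σ₀) * Real.exp (-(B * c₁))) * y :=
            mul_le_mul_of_nonneg_right hexpc₁ hy.le
        _ ≤ ((σ + σ₀) * Real.exp (-B * y)) * y :=
            mul_le_mul_of_nonneg_right
              (mul_le_mul_of_nonneg_left h3 (by positivity)) hy.le
        _ = A * (B * y * Real.exp (-B * y)) := by rw [← hAB]; ring
        _ ≤ A * (1 - Real.exp (-B * y)) := mul_le_mul_of_nonneg_left h2 hA.le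
        _ = α y := rfl
    set C := ∫ y in c₁..c, 1 / α y with hCdef
    have hC0 : 0 ≤ C := by
      rw [hCdef]
      apply intervalIntegral.integral_nonneg hc₁c.le
      intro y hy
      exact le_of_lt (div_pos one_pos (hαpos y (lt_of_lt_of_le hc₁pos hy.1)))
    set r := 1 - σ / σ' with hrdef
    have hr : 0 < r := by
      have : σ / σ' < 1 := (div_lt_one hσ'pos).2 hσσ'
      rw [hrdef]; linarith
    set M := max 0 ((σ * C - Real.log c + Real.log c₁) / r) + 1 with hMdef
    have hM1 : 1 ≤ M := by
      rw [hMdef]; have := le_max_left 0 ((σ * C - Real.log c + Real.log c₁) / r); linarith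
    have hq : σ * C - Real.log c + Real.log c₁ ≤ (M - 1) * r := by
      have h1 : (σ * C - Real.log c + Real.log c₁) / r ≤ M - 1 := by
        rw [hMdef]; simp [le_max_right]
      exact (div_le_iff₀ hr).mp h1
    set ε₀ := c₁ * Real.exp (-M) with hε₀def
    have hε₀pos : 0 < ε₀ := by rw [hε₀def]; positivity
    have hε₀c₁ : ε₀ < c₁ := by
      rw [hε₀def]
      have h : Real.exp (-M) < 1 := Real.exp_lt_one_iff.mpr (by linarith)
      exact mul_lt_of_lt_one_right hc₁pos h
    refine ⟨ε₀, hε₀pos, hε₀c₁.trans hc₁lt, ?_⟩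
    intro ε hε hεε₀
    have hεc₁ : ε < c₁ := hεε₀.trans hε₀c₁
    have hεc : ε < c := hεc₁.trans hc₁c
    have hi1 := hInt ε c₁ hε hεc₁.le
    have hi2 := hInt c₁ c hc₁pos hc₁c.le
    have hi3 := hInt ε c hε hεc.le
    have hsplit : (∫ y in ε..c₁, 1 / α y) + C = ∫ y in ε..c, 1 / α y := by
      rw [hCdef]
      exact intervalIntegral.integral_add_adjacent_intervals hi1 hi2
    have hIpos : 0 < ∫ y in ε..c, 1 / α y := by
      apply intervalIntegral.intervalIntegral_pos_of_pos_on hi3 _ hεc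
      intro y hy
      exact div_pos one_pos (hαpos y (hε.trans hy.1))
    have hi1' : IntervalIntegrable (fun y => 1 / (σ' * y)) MeasureTheory.volume ε c₁ := by
      apply ContinuousOn.intervalIntegrable
      apply ContinuousOn.div continuousOn_const (by fun_prop)
      intro y hy
      rw [Set.uIcc_of_le hεc₁.le] at hy
      exact (mul_pos hσ'pos (hε.trans_le hy.1)).ne'
    have hmono1 : (∫ y in ε..c₁, 1 / α y) ≤ ∫ y in ε..c₁, 1 / (σ' * y) := by
      apply intervalIntegral.integral_mono_on hεc₁.le hi1 hi1'
      intro y hy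
      have hy0 : 0 < y := lt_of_lt_of_le hε hy.1
      exact one_div_le_one_div_of_le (mul_pos hσ'pos hy0) (hlow y hy0 hy.2)
    have hval : (∫ y in ε..c₁, 1 / (σ' * y)) = (1 / σ') * (Real.log c₁ - Real.log ε) := by
      have h0 : (0:ℝ) ∉ Set.uIcc ε c₁ := by
        rw [Set.uIcc_of_le hεc₁.le]
        intro h
        exact absurd h.1 (not_le.2 hε)
      have heq : (fun y : ℝ => 1 / (σ' * y)) = fun y : ℝ => σ'⁻¹ * y⁻¹ := by
        funext y; rw [one_div, mul_inv]
      rw [heq, intervalIntegral.integral_const_mul, integral_inv h0,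
        Real.log_div hc₁pos.ne' hε.ne', one_div]
    rw [lt_div_iff₀ hIpos, ← hsplit, Real.log_div hc.ne' hε.ne']
    have hlogε : Real.log ε < Real.log c₁ - M := by
      have h1 : Real.log ε < Real.log ε₀ := Real.log_lt_log hε hεε₀
      rw [hε₀def, Real.log_mul hc₁pos.ne' (Real.exp_ne_zero _), Real.log_exp] at h1
      linarith
    set L := Real.log c₁ - Real.log ε with hLdef
    have hL : M < L := by rw [hLdef]; linarith
    have hI1 : σ * (∫ y in ε..c₁, 1 / α y) ≤ (1 - r) * L := by
      have h1 : σ * (∫ y in ε..c₁, 1 / α y) ≤ σ * ((1 / σ') * L) :=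
        mul_le_mul_of_nonneg_left (hmono1.trans_eq hval) hσ.le
      have h2 : σ * ((1 / σ') * L) = (1 - r) * L := by
        rw [hrdef]; field_simp; ring
      linarith
    have hrL : r * M < r * L := mul_lt_mul_of_pos_left hL hr
    have hLc : Real.log c - Real.log ε = Real.log c - Real.log c₁ + L := by
      rw [hLdef]; ring
    rw [hLc]
    clear_value L M C r σ'
    linarith [hI1, hrL, hq, hr, hC0]
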